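/- Hitting-time bound for the simple symmetric random walk: let t ≥ 1, let μ be the uniform distribution on functions ε : Fin t → Bool, and for j ≤ t define the partial sum S_j(ε) = ∑_{i < j} (if ε(i) then 1 else -1) ∈ ℤ. Then for every integer k ≥ 1, the probability that the walk started at 0 never reaches k within t steps satisfies Pr_{ε∼μ}[∀ j ≤ t, S_j(ε) ≠ k] ≤ (k · e · √2) / (π · √t). -/

import Mathlib

open scoped ENNReal

/-- Probability of an event under a PMF, as a real number. -/
noncomputable def PMF.pr {α : Type*} (μ : PMF α) (E : Set α) : ℝ :=
  (μ.toOuterMeasure E).toReal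

/-- The partial sum after `j` steps of the ±1 walk with step signs `ε`. -/
def partialSum (t : ℕ) (j : ℕ) (ε : Fin t → Bool) : ℤ :=
  ∑ i ∈ Finset.univ.filter (fun i : Fin t => (i : ℕ) < j), (if ε i then (1 : ℤ) else -1)

section Aux
open Real Filter


lemma stirling_upper (n : ℕ) (hn : 1 ≤ n) :
    (n.factorial : ℝ) ≤ (exp 1 / √2) * (√(2 * n) * ((n : ℝ) / exp 1) ^ n) := by
  have h1 : Stirling.stirlingSeq n ≤ Stirling.stirlingSeq 1 := by
    obtain ⟨m, rfl⟩ := Nat.exists_eq_add_of_le hn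
    simpa [Function.comp, Nat.add_comm] using Stirling.stirlingSeq'_antitone (Nat.zero_le m)
  rw [Stirling.stirlingSeq_one] at h1
  have hpos : 0 < √(2 * n : ℝ) * ((n : ℝ) / exp 1) ^ n := by
    have : (0:ℝ) < n := by exact_mod_cast hn
    positivity
  have h2 := (div_le_iff₀ hpos).mp h1
  simpa [Stirling.stirlingSeq] using h2

lemma stirling_lower (n : ℕ) :
    √π * (√(2 * n) * ((n : ℝ) / exp 1) ^ n) ≤ (n.factorial : ℝ) := by
  rcases Nat.eq_zero_or_pos n with rfl | hn
  · simp
  have h1 : √π ≤ Stirling.stirlingSeq n := by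
    obtain ⟨m, rfl⟩ := Nat.exists_eq_add_of_le hn
    have h2 : Filter.Tendsto (Stirling.stirlingSeq ∘ Nat.succ) atTop (nhds (√π)) :=
      Stirling.tendsto_stirlingSeq_sqrt_pi.comp (tendsto_add_atTop_nat 1)
    simpa [Function.comp, Nat.add_comm] using Stirling.stirlingSeq'_antitone.le_of_tendsto h2 m
  have hpos : 0 < √(2 * n : ℝ) * ((n : ℝ) / exp 1) ^ n := by
    have : (0:ℝ) < n := by exact_mod_cast hn
    positivity
  calc √π * (√(2 * n) * ((n : ℝ) / exp 1) ^ n)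
      ≤ Stirling.stirlingSeq n * (√(2 * n) * ((n : ℝ) / exp 1) ^ n) :=
        mul_le_mul_of_nonneg_right h1 hpos.le
    _ = (n.factorial : ℝ) := by
        rw [Stirling.stirlingSeq, div_mul_cancel₀ _ hpos.ne']

lemma centralBinom_le (n : ℕ) (hn : 1 ≤ n) :
    (Nat.centralBinom n : ℝ) ≤ exp 1 * 4 ^ n / (π * √(2 * n)) := by
  have hn0 : (0:ℝ) < n := by exact_mod_cast hn
  set E : ℝ := ((n : ℝ) / exp 1) ^ n with hE
  have hEpos : 0 < E := by positivity
  have hfact : ((2*n).factorial : ℝ) = (Nat.centralBinom n : ℝ) * (n.factorial : ℝ) * (n.factorial : ℝ) := by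
    rw [Nat.centralBinom]
    rw [← Nat.choose_mul_factorial_mul_factorial (by omega : n ≤ 2*n)]
    push_cast [show 2*n - n = n by omega]
    ring
  have hup := stirling_upper (2*n) (by omega)
  have hlo := stirling_lower n
  have h2n : ((2*n : ℕ) : ℝ) = 2 * (n:ℝ) := by push_cast; ring
  have h4 : √(2 * (2*(n:ℝ))) = 2 * √n := by
    rw [show (2:ℝ) * (2*(n:ℝ)) = 4 * n by ring, Real.sqrt_mul (by norm_num) (n:ℝ),
      show (4:ℝ) = 2^2 by norm_num, Real.sqrt_sq (by norm_num)]
  have hupE : ((2*n).factorial : ℝ) ≤ (exp 1 / √2) * ((2 * √n) * (4^n * (E * E))) := by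
    have hpow : ((2 * (n:ℝ)) / exp 1) ^ (2*n) = 4^n * (E * E) := by
      rw [hE, ← pow_add, ← two_mul, mul_div_assoc, mul_pow, pow_mul]
      norm_num
    calc ((2*n).factorial : ℝ) ≤ (exp 1 / √2) * (√(2 * (2*n : ℕ)) * (((2*n : ℕ) : ℝ) / exp 1) ^ (2*n)) := hup
      _ = (exp 1 / √2) * ((2 * √n) * (4^n * (E * E))) := by rw [h2n, hpow, h4]
  have key : (Nat.centralBinom n : ℝ) * (π * (2*n) * (E * E)) ≤ (exp 1 / √2) * ((2 * √n) * (4^n * (E * E))) := by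
    have hsq : (√π * (√(2 * n) * E)) * (√π * (√(2 * n) * E)) = π * (2*n) * (E * E) := by
      have h1 : √π * √π = π := Real.mul_self_sqrt pi_pos.le
      have h2 : √(2*(n:ℝ)) * √(2*(n:ℝ)) = 2*(n:ℝ) := Real.mul_self_sqrt (by positivity)
      calc (√π * (√(2 * n) * E)) * (√π * (√(2 * n) * E))
          = (√π * √π) * ((√(2*(n:ℝ)) * √(2*(n:ℝ))) * (E * E)) := by ring
        _ = π * (2*n) * (E * E) := by rw [h1, h2]; ring
    have hfl : (0:ℝ) ≤ √π * (√(2 * n) * E) := by positivity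
    have hcb : (0:ℝ) ≤ (Nat.centralBinom n : ℝ) := by positivity
    calc (Nat.centralBinom n : ℝ) * (π * (2*n) * (E * E))
        = (Nat.centralBinom n : ℝ) * ((√π * (√(2 * n) * E)) * (√π * (√(2 * n) * E))) := by rw [hsq]
      _ ≤ (Nat.centralBinom n : ℝ) * ((n.factorial : ℝ) * (n.factorial : ℝ)) := by
          apply mul_le_mul_of_nonneg_left _ hcb
          exact mul_le_mul hlo hlo hfl (by positivity)
      _ = ((2*n).factorial : ℝ) := by rw [hfact]; ring
      _ ≤ (exp 1 / √2) * ((2 * √n) * (4^n * (E * E))) := hupE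
  have key2 : (Nat.centralBinom n : ℝ) * (π * (2*n)) ≤ (exp 1 / √2) * ((2 * √n) * 4^n) := by
    have hE2 : (0:ℝ) < E * E := by positivity
    have := (mul_le_mul_iff_of_pos_right hE2).mpr (le_refl (1:ℝ))
    apply le_of_mul_le_mul_right _ hE2
    calc (Nat.centralBinom n : ℝ) * (π * (2*n)) * (E * E)
        = (Nat.centralBinom n : ℝ) * (π * (2*n) * (E * E)) := by ring
      _ ≤ (exp 1 / √2) * ((2 * √n) * (4^n * (E * E))) := key
      _ = (exp 1 / √2) * ((2 * √n) * 4^n) * (E * E) := by ring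
  have hs2n : √(2*(n:ℝ)) = √2 * √n := Real.sqrt_mul (by norm_num) _
  have hsn : (0:ℝ) < √n := Real.sqrt_pos.mpr hn0
  have hs2 : (0:ℝ) < √2 := by positivity
  have h2 : √2 * √2 = 2 := Real.mul_self_sqrt (by norm_num)
  have hnn : √(n:ℝ) * √(n:ℝ) = n := Real.mul_self_sqrt hn0.le
  rw [le_div_iff₀ (by rw [hs2n]; positivity), hs2n]
  apply le_of_mul_le_mul_right _ (mul_pos hs2 hsn)
  calc (Nat.centralBinom n : ℝ) * (π * (√2 * √n)) * (√2 * √n)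
      = (Nat.centralBinom n : ℝ) * (π * ((√2*√2) * (√n*√n))) := by ring
    _ = (Nat.centralBinom n : ℝ) * (π * (2*n)) := by rw [h2, hnn]
    _ ≤ (exp 1 / √2) * ((2 * √n) * 4^n) := key2
    _ = exp 1 * 4^n * (√2 * √n) := by
        rw [div_mul_eq_mul_div, div_eq_iff hs2.ne']
        linear_combination (-(exp 1 * √(n:ℝ) * 4 ^ n)) * h2

lemma choose_le_max_bound (t : ℕ) (ht : 1 ≤ t) (h : ℕ) :
    (t.choose h : ℝ) ≤ 2 ^ t * exp 1 / (π * √t) := by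
  have h1 : (t.choose h : ℝ) ≤ (t.choose (t/2) : ℝ) := by
    exact_mod_cast Nat.choose_le_middle h t
  refine h1.trans ?_
  rcases Nat.even_or_odd t with ⟨n, rfl⟩ | ⟨n, rfl⟩
  · -- t = n + n = 2n
    have hn : 1 ≤ n := by omega
    have e1 : (n + n) / 2 = n := by omega
    have e2 : n + n = 2 * n := by omega
    have := centralBinom_le n hn
    rw [Nat.centralBinom] at this
    rw [e1, e2]
    calc ((2*n).choose n : ℝ) ≤ exp 1 * 4 ^ n / (π * √(2 * n)) := by
          exact_mod_cast this
      _ = 2 ^ (2*n) * exp 1 / (π * √((2*n : ℕ) : ℝ)) := by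
          rw [pow_mul]; push_cast; ring_nf
  · -- t = 2n+1
    have e1 : (2*n + 1) / 2 = n := by omega
    rw [e1]
    have hpascal : (2*n+2).choose (n+1) = 2 * (2*n+1).choose n := by
      have hs : (2*n+1).choose (n+1) = (2*n+1).choose n := by
        rw [← Nat.choose_symm (by omega : n + 1 ≤ 2*n+1)]
        congr 1; omega
      have hp : (2*n+2).choose (n+1) = (2*n+1).choose n + (2*n+1).choose (n+1) := by
        rw [show 2*n+2 = (2*n+1)+1 by ring]
        exact Nat.choose_succ_succ (2*n+1) n
      omega
    have hcb := centralBinom_le (n+1) (by omega)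
    rw [Nat.centralBinom, show 2*(n+1) = 2*n+2 by ring] at hcb
    have hcast : ((2*n+1).choose n : ℝ) = ((2*n+2).choose (n+1) : ℝ) / 2 := by
      rw [hpascal]; push_cast; ring
    rw [hcast]
    have hmono : √((2*(n:ℝ)+1)) ≤ √(2*((n:ℝ)+1)) := Real.sqrt_le_sqrt (by linarith)
    have hsp : (0:ℝ) < √(2*(n:ℝ)+1) := Real.sqrt_pos.mpr (by positivity)
    have hsp2 : (0:ℝ) < √(2*((n:ℝ)+1)) := Real.sqrt_pos.mpr (by positivity)
    calc ((2*n+2).choose (n+1) : ℝ) / 2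
        ≤ (exp 1 * 4 ^ (n+1) / (π * √(2 * ((n:ℕ)+1 : ℕ)))) / 2 := by
          apply div_le_div_of_nonneg_right ?_ (by norm_num)
          · exact_mod_cast hcb
      _ = exp 1 * (2 * 4 ^ n) / (π * √(2*((n:ℝ)+1))) := by
          push_cast; ring_nf
      _ ≤ exp 1 * (2 * 4 ^ n) / (π * √(2*(n:ℝ)+1)) := by
          apply div_le_div_of_nonneg_left (by positivity) (by positivity)
          exact mul_le_mul_of_nonneg_left hmono pi_pos.le
      _ = 2 ^ (2*n+1) * exp 1 / (π * √(((2*n+1 : ℕ)) : ℝ)) := by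
          push_cast
          rw [pow_succ, pow_mul]
          norm_num; ring_nf

end Aux

namespace RW

lemma pS_zero (t : ℕ) (ε : Fin t → Bool) : partialSum t 0 ε = 0 := by
  simp [partialSum]

lemma pS_succ (t j : ℕ) (hj : j < t) (ε : Fin t → Bool) :
    partialSum t (j+1) ε = partialSum t j ε + (if ε ⟨j, hj⟩ then 1 else -1) := by
  unfold partialSum
  rw [show Finset.univ.filter (fun i : Fin t => (i : ℕ) < j + 1)
      = insert (⟨j, hj⟩ : Fin t) (Finset.univ.filter (fun i : Fin t => (i : ℕ) < j)) by
    ext i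
    simp only [Finset.mem_insert, Finset.mem_filter, Finset.mem_univ, true_and]
    constructor
    · intro hi
      rcases Nat.lt_succ_iff_lt_or_eq.mp hi with h | h
      · exact Or.inr h
      · exact Or.inl (Fin.ext h)
    · rintro (rfl | hi)
      · exact Nat.lt_succ_self j
      · exact Nat.lt_succ_of_lt hi]
  rw [Finset.sum_insert (by simp)]
  ring

lemma pS_congr (t j : ℕ) (ε ε' : Fin t → Bool)
    (h : ∀ i : Fin t, (i : ℕ) < j → ε i = ε' i) :
    partialSum t j ε = partialSum t j ε' := by
  unfold partialSum
  apply Finset.sum_congr rfl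
  intro i hi
  rw [h i (by simpa using hi)]

lemma pS_neg (t j : ℕ) (ε : Fin t → Bool) :
    partialSum t j (fun i => !(ε i)) = - partialSum t j ε := by
  unfold partialSum
  rw [← Finset.sum_neg_distrib]
  apply Finset.sum_congr rfl
  intro i _
  cases h : ε i <;> simp [h]

lemma pS_step_bound (t j : ℕ) (hj : j < t) (ε : Fin t → Bool) :
    partialSum t (j+1) ε ≤ partialSum t j ε + 1 := by
  rw [pS_succ t j hj]
  split <;> omega

/-- If the walk never equals `k` (with `k ≥ 1`) up to time `t`, it stays below `k`. -/
lemma below_of_never (t : ℕ) (k : ℤ) (hk : 1 ≤ k) (ε : Fin t → Bool)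
    (h : ∀ j ≤ t, partialSum t j ε ≠ k) : ∀ j ≤ t, partialSum t j ε < k := by
  intro j hj
  induction j with
  | zero => rw [pS_zero]; omega
  | succ m ih =>
    have hm := ih (by omega)
    have hb := pS_step_bound t m (by omega) ε
    have hne := h (m+1) hj
    omega

/-- If the walk ends at or above `k ≥ 0`, it hits `k`. -/
lemma hit_of_ge (t : ℕ) (k : ℤ) (hk : 1 ≤ k) (ε : Fin t → Bool)
    (h : k ≤ partialSum t t ε) : ∃ j, j ≤ t ∧ partialSum t j ε = k := by
  by_contra hc
  push_neg at hc
  have := below_of_never t k hk ε (fun j hj => hc j hj) t le_rfl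
  omega

lemma pS_full (t : ℕ) (ε : Fin t → Bool) :
    partialSum t t ε = 2 * ((Finset.univ.filter (fun i : Fin t => ε i = true)).card : ℤ) - t := by
  unfold partialSum
  rw [show Finset.univ.filter (fun i : Fin t => (i : ℕ) < t) = (Finset.univ : Finset (Fin t)) by
    ext i; simp [i.isLt]]
  calc (∑ i : Fin t, if ε i = true then (1:ℤ) else -1)
      = ∑ i : Fin t, (2 * (if ε i = true then (1:ℤ) else 0) - 1) := by
        apply Finset.sum_congr rfl
        intro i _
        cases h : ε i <;> simp [h]
    _ = 2 * (∑ i : Fin t, (if ε i = true then (1:ℤ) else 0)) - t := by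
        rw [Finset.sum_sub_distrib, ← Finset.mul_sum]
        simp [Finset.card_univ]
    _ = 2 * ((Finset.univ.filter (fun i : Fin t => ε i = true)).card : ℤ) - t := by
        rw [Finset.sum_boole]

section Reflection

variable (t : ℕ) (k : ℤ)

/-- The hitting predicate: the walk reaches `k` within `t` steps. -/
def HitP (ε : Fin t → Bool) : Prop := ∃ j, j ≤ t ∧ partialSum t j ε = k

instance : DecidablePred (HitP t k) := fun ε => by unfold HitP; infer_instance

/-- First hitting time (0 if the walk never hits `k`). -/
def tau (ε : Fin t → Bool) : ℕ := if h : HitP t k ε then Nat.find h else 0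

/-- Reflection of the path after the first hitting time. -/
def reflMap (ε : Fin t → Bool) : Fin t → Bool :=
  fun i => if (i : ℕ) < tau t k ε then ε i else !(ε i)

variable {t k}

lemma tau_le {ε : Fin t → Bool} (h : HitP t k ε) : tau t k ε ≤ t := by
  rw [tau, dif_pos h]
  exact (Nat.find_spec h).1

lemma tau_spec {ε : Fin t → Bool} (h : HitP t k ε) : partialSum t (tau t k ε) ε = k := by
  rw [tau, dif_pos h]
  exact (Nat.find_spec h).2

lemma tau_min {ε : Fin t → Bool} (h : HitP t k ε) {j : ℕ} (hj : j < tau t k ε) (hjt : j ≤ t) :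
    partialSum t j ε ≠ k := by
  rw [tau, dif_pos h] at hj
  intro hc
  exact Nat.find_min h hj ⟨hjt, hc⟩

lemma pS_reflMap_le {ε : Fin t → Bool} {j : ℕ} (hj : j ≤ tau t k ε) :
    partialSum t j (reflMap t k ε) = partialSum t j ε := by
  apply pS_congr
  intro i hi
  rw [reflMap, if_pos (by omega)]

lemma hit_reflMap {ε : Fin t → Bool} (h : HitP t k ε) : HitP t k (reflMap t k ε) := by
  exact ⟨tau t k ε, tau_le h, by rw [pS_reflMap_le le_rfl]; exact tau_spec h⟩

lemma pS_reflMap_ge {ε : Fin t → Bool} (h : HitP t k ε) {j : ℕ} (hj1 : tau t k ε ≤ j)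
    (hj2 : j ≤ t) : partialSum t j (reflMap t k ε) = 2 * k - partialSum t j ε := by
  induction j, hj1 using Nat.le_induction with
  | base =>
    rw [pS_reflMap_le le_rfl, tau_spec h]
    ring
  | succ m hm ih =>
    have hmt : m < t := by omega
    rw [pS_succ t m hmt, pS_succ t m hmt, ih (by omega)]
    simp only [reflMap]
    have hcond : (if m < tau t k ε then ε ⟨m, hmt⟩ else !(ε ⟨m, hmt⟩)) = !(ε ⟨m, hmt⟩) :=
      if_neg (by omega)
    simp only [hcond]
    cases hb : ε ⟨m, hmt⟩ <;> simp [hb] <;> ring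

lemma tau_reflMap {ε : Fin t → Bool} (h : HitP t k ε) : tau t k (reflMap t k ε) = tau t k ε := by
  have h' := hit_reflMap h
  apply le_antisymm
  · -- tau (refl ε) ≤ tau ε since refl ε hits at tau ε
    rw [tau, dif_pos h']
    exact Nat.find_min' h' ⟨tau_le h, by rw [pS_reflMap_le le_rfl]; exact tau_spec h⟩
  · by_contra hc
    push_neg at hc
    have hle : tau t k (reflMap t k ε) ≤ t := tau_le h'
    -- S_{tau(refl ε)} (refl ε) = k but also = S_{tau(refl ε)} ε since index ≤ tau ε
    have h1 : partialSum t (tau t k (reflMap t k ε)) (reflMap t k ε) = k := tau_spec h'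
    rw [pS_reflMap_le hc.le] at h1
    exact tau_min h hc (tau_le h') h1

lemma reflMap_reflMap {ε : Fin t → Bool} (h : HitP t k ε) :
    reflMap t k (reflMap t k ε) = ε := by
  funext i
  rw [reflMap, tau_reflMap h, reflMap]
  by_cases hi : (i : ℕ) < tau t k ε <;> simp [hi]

lemma reflMap_inj {ε ε' : Fin t → Bool} (h : HitP t k ε) (h' : HitP t k ε')
    (heq : reflMap t k ε = reflMap t k ε') : ε = ε' := by
  rw [← reflMap_reflMap h, heq, reflMap_reflMap h']

end Reflection

section Counting

variable (t : ℕ) (k : ℤ)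

open Finset

/-- Number of `true`s. -/
def ones (ε : Fin t → Bool) : ℕ := (univ.filter (fun i : Fin t => ε i = true)).card

lemma card_ones_fiber (h : ℕ) :
    (univ.filter (fun ε : Fin t → Bool => ones t ε = h)).card = t.choose h := by
  have hgoal : t.choose h = (Finset.powersetCard h (univ : Finset (Fin t))).card := by
    rw [Finset.card_powersetCard, Finset.card_univ, Fintype.card_fin]
  rw [hgoal]
  apply Finset.card_bij' (fun ε _ => univ.filter (fun i : Fin t => ε i = true))
    (fun s _ => fun i => decide (i ∈ s))
  · intro ε hε
    rw [Finset.mem_powersetCard_univ]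
    simpa [ones] using (Finset.mem_filter.mp hε).2
  · intro s hs
    rw [Finset.mem_filter]
    refine ⟨Finset.mem_univ _, ?_⟩
    rw [Finset.mem_powersetCard_univ] at hs
    rw [← hs, ones]
    congr 1
    ext i
    simp
  · intro ε hε
    funext i
    simp
  · intro s hs
    ext i
    simp

/-- The "never hits k" event, as a finset. -/
def neverSet : Finset (Fin t → Bool) :=
  univ.filter (fun ε => ∀ j ≤ t, partialSum t j ε ≠ k)

lemma card_never_le_mid (hk : 1 ≤ k) :
    (neverSet t k).card ≤
      (univ.filter (fun ε : Fin t → Bool =>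
        -k ≤ partialSum t t ε ∧ partialSum t t ε < k)).card := by
  classical
  set A := neverSet t k with hA
  set B := univ.filter (fun ε : Fin t → Bool => partialSum t t ε < -k) with hB
  set C := univ.filter (fun ε : Fin t → Bool => partialSum t t ε < k) with hC
  set D := univ.filter (fun ε : Fin t → Bool =>
        -k ≤ partialSum t t ε ∧ partialSum t t ε < k) with hD
  have hAC : A ⊆ C := by
    intro ε hε
    rw [hA, neverSet, Finset.mem_filter] at hε
    rw [hC, Finset.mem_filter]
    exact ⟨Finset.mem_univ _, below_of_never t k hk ε hε.2 t le_rfl⟩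
  -- the reflected-flip map
  set ψ : (Fin t → Bool) → (Fin t → Bool) := fun ε => reflMap t k (fun i => !(ε i)) with hψ
  have hflip : ∀ ε : Fin t → Bool, ε ∈ B → HitP t k (fun i => !(ε i)) := by
    intro ε hε
    rw [hB, Finset.mem_filter] at hε
    apply hit_of_ge t k hk
    rw [pS_neg]
    omega
  have hψC : ∀ ε ∈ B, ψ ε ∈ C := by
    intro ε hε
    have hh := hflip ε hε
    rw [hB, Finset.mem_filter] at hε
    rw [hC, Finset.mem_filter]
    refine ⟨Finset.mem_univ _, ?_⟩
    rw [hψ]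
    have := pS_reflMap_ge hh (tau_le hh) le_rfl
    rw [this, pS_neg]
    omega
  have hψA : ∀ ε ∈ B, ψ ε ∉ A := by
    intro ε hε hmem
    have hh := hit_reflMap (hflip ε hε)
    obtain ⟨j, hj, hjeq⟩ := hh
    rw [hA, neverSet, Finset.mem_filter] at hmem
    exact hmem.2 j hj hjeq
  have hinj : Set.InjOn ψ B := by
    intro ε hε ε' hε' heq
    have h1 := reflMap_inj (hflip ε hε) (hflip ε' hε') heq
    funext i
    have := congrFun h1 i
    cases hb : ε i <;> cases hb' : ε' i <;> simp [hb, hb'] at this ⊢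
  have hcard : A.card + B.card ≤ C.card := by
    have him : (B.image ψ).card = B.card := Finset.card_image_of_injOn hinj
    have hdisj : Disjoint A (B.image ψ) := by
      rw [Finset.disjoint_right]
      intro x hx
      obtain ⟨ε, hε, rfl⟩ := Finset.mem_image.mp hx
      exact hψA ε hε
    have hsub : A ∪ B.image ψ ⊆ C := by
      apply Finset.union_subset hAC
      intro x hx
      obtain ⟨ε, hε, rfl⟩ := Finset.mem_image.mp hx
      exact hψC ε hε
    calc A.card + B.card = A.card + (B.image ψ).card := by rw [him]
      _ = (A ∪ B.image ψ).card := (Finset.card_union_of_disjoint hdisj).symm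
      _ ≤ C.card := Finset.card_le_card hsub
  have hBD : B.card + D.card = C.card := by
    rw [← Finset.card_union_of_disjoint]
    · congr 1
      rw [hB, hC, hD, ← Finset.filter_or]
      apply Finset.filter_congr
      intro ε _
      constructor
      · rintro (h | h) <;> omega
      · intro h
        omega
    · rw [Finset.disjoint_left]
      intro ε hε hε'
      rw [hB, Finset.mem_filter] at hε
      rw [hD, Finset.mem_filter] at hε'
      omega
  omega

lemma card_mid_le (hk : 1 ≤ k) :
    (univ.filter (fun ε : Fin t → Bool =>
        -k ≤ partialSum t t ε ∧ partialSum t t ε < k)).card ≤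
      k.toNat * t.choose (t/2) := by
  classical
  set D := univ.filter (fun ε : Fin t → Bool =>
        -k ≤ partialSum t t ε ∧ partialSum t t ε < k) with hD
  set Hk := (Finset.range (t+1)).filter
      (fun h : ℕ => -k ≤ 2*(h:ℤ) - t ∧ 2*(h:ℤ) - t < k) with hHk
  have hmaps : ∀ ε ∈ D, ones t ε ∈ Hk := by
    intro ε hε
    rw [hD, Finset.mem_filter] at hε
    have hfull := pS_full t ε
    rw [hHk, Finset.mem_filter, Finset.mem_range]
    have hle : ones t ε ≤ t := by
      rw [ones]
      calc _ ≤ (univ : Finset (Fin t)).card := Finset.card_le_card (Finset.filter_subset _ _)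
        _ = t := by simp
    simp only [ones] at *
    omega
  rw [Finset.card_eq_sum_card_fiberwise hmaps]
  have hfib : ∀ h ∈ Hk, (D.filter (fun ε => ones t ε = h)).card ≤ t.choose (t/2) := by
    intro h _
    calc (D.filter (fun ε => ones t ε = h)).card
        ≤ (univ.filter (fun ε : Fin t → Bool => ones t ε = h)).card := by
          apply Finset.card_le_card
          intro ε hε
          rw [Finset.mem_filter] at hε ⊢
          exact ⟨Finset.mem_univ _, hε.2⟩
      _ = t.choose h := card_ones_fiber t h
      _ ≤ t.choose (t/2) := Nat.choose_le_middle h t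
  have hcardHk : Hk.card ≤ k.toNat := by
    rcases Finset.eq_empty_or_nonempty Hk with he | hne
    · simp [he]
    · have hsub : Hk ⊆ Finset.Ico (Hk.min' hne) (Hk.min' hne + k.toNat) := by
        intro h hh
        rw [Finset.mem_Ico]
        refine ⟨Finset.min'_le _ _ hh, ?_⟩
        have hprop : ∀ x, x ∈ Hk → (-k ≤ 2*(x:ℤ) - t ∧ 2*(x:ℤ) - t < k) := by
          intro x hx
          rw [hHk, Finset.mem_filter] at hx
          exact hx.2
        have h1 := hprop _ (Finset.min'_mem Hk hne)
        have h2 := hprop _ hh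
        omega
      calc Hk.card ≤ (Finset.Ico (Hk.min' hne) (Hk.min' hne + k.toNat)).card :=
            Finset.card_le_card hsub
        _ = k.toNat := by rw [Nat.card_Ico]; omega
  calc ∑ h ∈ Hk, (D.filter (fun ε => ones t ε = h)).card
      ≤ ∑ _h ∈ Hk, t.choose (t/2) := Finset.sum_le_sum hfib
    _ = Hk.card * t.choose (t/2) := by rw [Finset.sum_const, smul_eq_mul]
    _ ≤ k.toNat * t.choose (t/2) := Nat.mul_le_mul_right _ hcardHk

end Counting

end RW


open Real in
/-- Hitting-time bound for the simple symmetric random walk: the probability that the walk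
started at `0` does not reach `k ≥ 1` within `t` steps is at most `k e √2 / (π √t)`. -/
theorem random_walk_hitting_bound (t : ℕ) (ht : 1 ≤ t) (k : ℤ) (hk : 1 ≤ k) :
    (PMF.uniformOfFintype (Fin t → Bool)).pr {ε | ∀ j ≤ t, partialSum t j ε ≠ k} ≤
      (k : ℝ) * Real.exp 1 * Real.sqrt 2 / (Real.pi * Real.sqrt t) := by
  classical
  have hpr : (PMF.uniformOfFintype (Fin t → Bool)).pr {ε | ∀ j ≤ t, partialSum t j ε ≠ k}
      = ((RW.neverSet t k).card : ℝ) / 2^t := by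
    have hcard : (Fintype.card (Fin t → Bool)) = 2^t := by simp
    have hEset : {ε : Fin t → Bool | ∀ j ≤ t, partialSum t j ε ≠ k} = ↑(RW.neverSet t k) := by
      ext ε; simp [RW.neverSet]
    rw [PMF.pr, hEset, PMF.toOuterMeasure_apply_finset]
    simp only [PMF.uniformOfFintype_apply, hcard]
    rw [Finset.sum_const, nsmul_eq_mul, ENNReal.toReal_mul, ENNReal.toReal_inv]
    push_cast
    rfl
  rw [hpr]
  have hk0 : (0:ℝ) ≤ (k:ℝ) := by exact_mod_cast (by omega : (0:ℤ) ≤ k)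
  have hcount : ((RW.neverSet t k).card : ℝ) ≤ (k : ℝ) * (t.choose (t/2) : ℝ) := by
    have h1 : (RW.neverSet t k).card ≤ k.toNat * t.choose (t/2) :=
      le_trans (RW.card_never_le_mid t k hk) (RW.card_mid_le t k hk)
    have h2 : ((k.toNat : ℕ) : ℝ) = (k : ℝ) := by
      have h3 := Int.toNat_of_nonneg (le_trans zero_le_one hk)
      exact_mod_cast congrArg (fun z : ℤ => (z : ℝ)) h3
    calc ((RW.neverSet t k).card : ℝ) ≤ ((k.toNat * t.choose (t/2) : ℕ) : ℝ) := by
          exact_mod_cast h1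
      _ = (k:ℝ) * (t.choose (t/2) : ℝ) := by push_cast; rw [h2]
  have hchoose := choose_le_max_bound t ht (t/2)
  have hπ : (0:ℝ) < π := Real.pi_pos
  have hst : (0:ℝ) < √(t:ℝ) := Real.sqrt_pos.mpr (by exact_mod_cast ht)
  have h2t : (0:ℝ) < 2^t := by positivity
  calc ((RW.neverSet t k).card : ℝ) / 2^t
      ≤ ((k:ℝ) * (2^t * Real.exp 1 / (π * √(t:ℝ)))) / 2^t := by
        apply div_le_div_of_nonneg_right ?_ h2t.le
        exact hcount.trans (mul_le_mul_of_nonneg_left hchoose hk0)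
    _ = (k:ℝ) * Real.exp 1 / (π * √(t:ℝ)) := by
        field_simp
    _ ≤ (k:ℝ) * Real.exp 1 * √2 / (π * √(t:ℝ)) := by
        have h12 : (1:ℝ) ≤ √2 := by
          rw [show (1:ℝ) = √1 by simp]
          exact Real.sqrt_le_sqrt one_le_two
        apply div_le_div_of_nonneg_right ?_ (by positivity : (0:ℝ) ≤ π * √(t:ℝ))
        nlinarith [mul_nonneg (mul_nonneg hk0 (Real.exp_pos 1).le) (sub_nonneg.mpr h12)]
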